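/- Let X be a topological space, E a Banach space over 𝕜, and 𝒜 a standard subalgebra of B(E). Let F₁, F₂ ∈ C(X, 𝒜) and suppose F₂ ∈ AI, i.e., L(F₂) ⊆ R(F₂). Then F₁·F₂ = 0 if and only if c(F₁) ∩ c(F₂) = ∅. -/

import Mathlib

set_option synthInstance.maxHeartbeats 400000
set_option maxHeartbeats 1000000

/-- A subalgebra of `B(E)` is *standard* if it contains every continuous finite-rank
operator (it contains the identity automatically, being a subalgebra). -/
def IsStandardSubalgebra (𝕜 : Type*) [RCLike 𝕜] {E : Type*} [NormedAddCommGroup E]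
    [NormedSpace 𝕜 E] (𝒜 : Subalgebra 𝕜 (E →L[𝕜] E)) : Prop :=
  ∀ A : E →L[𝕜] E, FiniteDimensional 𝕜 (LinearMap.range (A : E →ₗ[𝕜] E)) → A ∈ 𝒜

private lemma aux_mp
    {𝕜 : Type*} [RCLike 𝕜]
    {E : Type*} [NormedAddCommGroup E] [NormedSpace 𝕜 E] [CompleteSpace E]
    (𝒜 : Subalgebra 𝕜 (E →L[𝕜] E)) (h𝒜 : IsStandardSubalgebra 𝕜 𝒜)
    {X : Type*} [TopologicalSpace X]
    (F₁ F₂ : C(X, 𝒜))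
    (hAI : ∀ G : C(X, 𝒜), G * F₂ = 0 → F₂ * G = 0)
    (h : F₁ * F₂ = 0) : {x | F₁ x ≠ 0} ∩ {x | F₂ x ≠ 0} = ∅ := by
  by_contra hne
  obtain ⟨x₀, h1, h2⟩ := Set.nonempty_iff_ne_empty.mpr hne
  simp only [Set.mem_setOf_eq] at h1 h2
  set A : E →L[𝕜] E := (F₁ x₀ : E →L[𝕜] E) with hAdef
  set B : E →L[𝕜] E := (F₂ x₀ : E →L[𝕜] E) with hBdef
  have hA : A ≠ 0 := fun hz => h1 (Subtype.ext hz)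
  have hB : B ≠ 0 := fun hz => h2 (Subtype.ext hz)
  obtain ⟨w, hw⟩ : ∃ w, A w ≠ 0 := by
    by_contra hc; push_neg at hc
    exact hA (ContinuousLinearMap.ext fun u => by simpa using hc u)
  obtain ⟨v, hv⟩ : ∃ v, B v ≠ 0 := by
    by_contra hc; push_neg at hc
    exact hB (ContinuousLinearMap.ext fun u => by simpa using hc u)
  obtain ⟨φ, hφnorm, hφ⟩ := exists_dual_vector 𝕜 (A w) (norm_ne_zero_iff.mpr hw)
  have hφne : φ (A w) ≠ 0 := by
    rw [hφ]
    simpa using norm_ne_zero_iff.mpr hw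
  set K : E →L[𝕜] E := φ.smulRight v with hKdef
  have hKfd : FiniteDimensional 𝕜 (LinearMap.range (K : E →ₗ[𝕜] E)) := by
    have hle : LinearMap.range (K : E →ₗ[𝕜] E) ≤ Submodule.span 𝕜 {v} := by
      rintro y ⟨u, rfl⟩
      have : (K : E →ₗ[𝕜] E) u = φ u • v := rfl
      rw [this]
      exact Submodule.smul_mem _ _ (Submodule.mem_span_singleton_self v)
    exact Submodule.finiteDimensional_of_le hle
  set K𝒜 : 𝒜 := ⟨K, h𝒜 K hKfd⟩ with hK𝒜def
  set G : C(X, 𝒜) := ContinuousMap.const X K𝒜 * F₁ with hGdef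
  have hG : G * F₂ = 0 := by
    apply ContinuousMap.ext
    intro x
    have hx : F₁ x * F₂ x = 0 := by
      have := ContinuousMap.ext_iff.mp h x
      simpa using this
    rw [hGdef]
    show (ContinuousMap.const X K𝒜 * F₁ * F₂) x = (0 : C(X, ↥𝒜)) x
    rw [ContinuousMap.mul_apply, ContinuousMap.mul_apply, ContinuousMap.const_apply,
      ContinuousMap.zero_apply, mul_assoc, hx, mul_zero]
  have hF₂G := ContinuousMap.ext_iff.mp (hAI G hG) x₀
  have hzero : F₂ x₀ * (K𝒜 * F₁ x₀) = 0 := by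
    rw [ContinuousMap.mul_apply, ContinuousMap.zero_apply, hGdef,
      ContinuousMap.mul_apply, ContinuousMap.const_apply] at hF₂G
    exact hF₂G
  have hop : B * (K * A) = 0 := by
    have h' := congrArg (Subtype.val : 𝒜 → (E →L[𝕜] E)) hzero
    rw [MulMemClass.coe_mul, MulMemClass.coe_mul] at h'
    exact h'
  have happ : B (K (A w)) = 0 := by
    have := ContinuousLinearMap.ext_iff.mp hop w
    simpa [ContinuousLinearMap.mul_apply] using this
  have : B (K (A w)) = φ (A w) • B v := by
    rw [hKdef]
    simp [ContinuousLinearMap.smulRight_apply]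
  rw [this] at happ
  exact smul_ne_zero hφne hv happ

private lemma aux_mpr
    {𝕜 : Type*} [RCLike 𝕜]
    {E : Type*} [NormedAddCommGroup E] [NormedSpace 𝕜 E] [CompleteSpace E]
    (𝒜 : Subalgebra 𝕜 (E →L[𝕜] E))
    {X : Type*} [TopologicalSpace X]
    (F₁ F₂ : C(X, 𝒜))
    (h : {x | F₁ x ≠ 0} ∩ {x | F₂ x ≠ 0} = ∅) : F₁ * F₂ = 0 := by
  refine ContinuousMap.ext_iff.mpr fun x => ?_
  have hx : ¬ (F₁ x ≠ 0 ∧ F₂ x ≠ 0) := by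
    intro ⟨ha, hb⟩
    have : x ∈ ({x | F₁ x ≠ 0} ∩ {x | F₂ x ≠ 0}) := ⟨ha, hb⟩
    rw [h] at this
    exact this
  simp only [ContinuousMap.mul_apply, ContinuousMap.zero_apply]
  rcases not_and_or.mp hx with ha | hb
  · push_neg at ha
    rw [ha, zero_mul]
  · push_neg at hb
    rw [hb, mul_zero]

theorem mul_eq_zero_iff_cozero_disjoint_of_mem_AI
    {𝕜 : Type*} [RCLike 𝕜]
    {E : Type*} [NormedAddCommGroup E] [NormedSpace 𝕜 E] [CompleteSpace E]
    (𝒜 : Subalgebra 𝕜 (E →L[𝕜] E)) (h𝒜 : IsStandardSubalgebra 𝕜 𝒜)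
    {X : Type*} [TopologicalSpace X]
    (F₁ F₂ : C(X, 𝒜))
    (hAI : ∀ G : C(X, 𝒜), G * F₂ = 0 → F₂ * G = 0) :
    F₁ * F₂ = 0 ↔ {x | F₁ x ≠ 0} ∩ {x | F₂ x ≠ 0} = ∅ :=
  ⟨aux_mp 𝒜 h𝒜 F₁ F₂ hAI, aux_mpr 𝒜 F₁ F₂⟩
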